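/- Let g_1,...,g_k be polynomials in variables z_1,...,z_k over a field, each of total degree less than k-1, such that for all i < j the substitution z_i = z_j makes g_i and g_j equal as polynomials. Then the sum over i of g_i / ∏_{j≠i}(z_j - z_i), viewed as a rational function, is identically zero; equivalently, the polynomial ∑_{i=1}^k (-1)^{i-1} g_i ∏_{a<b, a,b≠i}(z_b - z_a) is the zero polynomial. -/

import Mathlib

open MvPolynomial

set_option maxRecDepth 8000

namespace SumVanishAux

lemma aeval_fix {R : Type*} [CommRing R] {σ : Type*} [DecidableEq σ] (i : σ)
    (f : σ → MvPolynomial σ R) (hf : ∀ l, l ≠ i → f l = X l) {Q : MvPolynomial σ R}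
    (hQ : ∀ m ∈ Q.support, m i = 0) : aeval f Q = Q := by
  conv_lhs => rw [Q.as_sum]
  conv_rhs => rw [Q.as_sum]
  rw [map_sum]
  refine Finset.sum_congr rfl fun m hm => ?_
  rw [aeval_monomial, monomial_eq, algebraMap_eq]
  congr 1
  refine Finsupp.prod_congr fun l hl => ?_
  rw [hf l ?_]
  rintro rfl
  exact Finsupp.mem_support_iff.mp hl (hQ m hm)

lemma X_dvd_of_aeval_eq_zero {R : Type*} [CommRing R] {σ : Type*} [DecidableEq σ] (i : σ)
    (f : σ → MvPolynomial σ R) (hfi : f i = 0) (hf : ∀ l, l ≠ i → f l = X l)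
    {P : MvPolynomial σ R} (h : aeval f P = 0) : X i ∣ P := by
  rw [X_dvd_iff_modMonomial_eq_zero]
  have hrec := modMonomial_add_divMonomial_single P i
  have h2 : aeval f (P.modMonomial (Finsupp.single i 1)) = aeval f P := by
    conv_rhs => rw [← hrec]
    rw [map_add, map_mul, aeval_X, hfi, zero_mul, add_zero]
  have h3 : aeval f (P.modMonomial (Finsupp.single i 1)) = P.modMonomial (Finsupp.single i 1) := by
    refine aeval_fix i f hf fun m hm => ?_
    by_contra hmi
    exact MvPolynomial.mem_support_iff.mp hm
      (coeff_modMonomial_of_le P (Finsupp.single_le_iff.mpr (Nat.one_le_iff_ne_zero.mpr hmi)))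
  rw [← h3, h2, h]

lemma prod_dvd_of_primes {α : Type*} [CommMonoidWithZero α] [IsCancelMulZero α] {ι : Type*} [DecidableEq ι]
    (s : Finset ι) (f : ι → α) (hp : ∀ i ∈ s, Prime (f i))
    (hd : ∀ i ∈ s, ∀ j ∈ s, i ≠ j → ¬ f i ∣ f j) :
    ∀ z, (∀ i ∈ s, f i ∣ z) → (∏ i ∈ s, f i) ∣ z := by
  classical
  induction s using Finset.induction_on with
  | empty => simp
  | @insert a s ha ih =>
    intro z hz
    obtain ⟨w, rfl⟩ := hz a (Finset.mem_insert_self a s)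
    rw [Finset.prod_insert ha]
    refine mul_dvd_mul_left _ (ih (fun i hi => hp i (Finset.mem_insert_of_mem hi))
      (fun i hi j hj hij => hd i (Finset.mem_insert_of_mem hi) j (Finset.mem_insert_of_mem hj) hij)
      w fun i hi => ?_)
    have hia : i ≠ a := fun h => ha (h ▸ hi)
    exact ((hp i (Finset.mem_insert_of_mem hi)).2.2 _ _
      (hz i (Finset.mem_insert_of_mem hi))).resolve_left
      (hd i (Finset.mem_insert_of_mem hi) a (Finset.mem_insert_self a s) hia)

lemma le_totalDegree_mul {σ R : Type*} [CommRing R] [IsDomain R] {V Q : MvPolynomial σ R}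
    {M : ℕ} (hV : V.IsHomogeneous M) (hV0 : V ≠ 0) (hQ : Q ≠ 0) :
    M ≤ (V * Q).totalDegree := by
  classical
  set d := Q.totalDegree with hd
  have hQd : homogeneousComponent d Q ≠ 0 := by
    obtain ⟨m, hm, hsup⟩ := Finset.exists_mem_eq_sup Q.support
      (MvPolynomial.support_nonempty.mpr hQ) (fun m => m.sum fun _ e => e)
    have hmd : m.degree = d := by
      rw [hd, totalDegree, hsup]; rfl
    intro h0
    have hc := coeff_homogeneousComponent d Q m
    rw [h0, coeff_zero, if_pos hmd] at hc
    exact MvPolynomial.mem_support_iff.mp hm hc.symm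
  have hW : V * homogeneousComponent d Q ≠ 0 := mul_ne_zero hV0 hQd
  obtain ⟨m, hm⟩ := MvPolynomial.support_nonempty.mpr hW
  have hmdeg : m.degree = M + d := by
    by_contra hne
    exact MvPolynomial.mem_support_iff.mp hm
      (((hV.mul (homogeneousComponent_isHomogeneous d Q)).coeff_eq_zero) hne)
  have key : coeff m (V * Q) = coeff m (V * homogeneousComponent d Q) := by
    conv_lhs => rw [← sum_homogeneousComponent Q, Finset.mul_sum]
    rw [coeff_sum]
    rw [Finset.sum_eq_single d (fun n _ hnd => ?_) (fun hdn => ?_)]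
    · exact ((hV.mul (homogeneousComponent_isHomogeneous n Q)).coeff_eq_zero)
        (by rw [hmdeg]; omega)
    · exact absurd (Finset.mem_range.mpr (by omega)) hdn
  have hmem : m ∈ (V * Q).support :=
    MvPolynomial.mem_support_iff.mpr (by rw [key]; exact MvPolynomial.mem_support_iff.mp hm)
  have := le_totalDegree hmem
  have hms : (m.sum fun _ e => e) = m.degree := rfl
  omega

variable {F : Type*} [Field F] {k : ℕ}

/-- The substitution `X i ↦ X j`. -/
noncomputable def Ssub (i j : Fin k) : MvPolynomial (Fin k) F →ₐ[F] MvPolynomial (Fin k) F :=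
  aeval (fun l => if l = i then X j else X l)

lemma Ssub_eq_zero_of_dvd {i j : Fin k} {P : MvPolynomial (Fin k) F}
    (h : (X j - X i) ∣ P) : Ssub i j P = 0 := by
  obtain ⟨c, rfl⟩ := h
  rw [map_mul]
  have : Ssub i j (X j - X i : MvPolynomial (Fin k) F) = 0 := by
    simp [Ssub]
  rw [this, zero_mul]

lemma dvd_of_Ssub_eq_zero {i j : Fin k} (hij : i ≠ j) {P : MvPolynomial (Fin k) F}
    (h : Ssub i j P = 0) : (X j - X i) ∣ P := by
  classical
  set β : MvPolynomial (Fin k) F →ₐ[F] MvPolynomial (Fin k) F :=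
    aeval (fun l => if l = i then (X i - X j) else X l) with hβ
  set α : MvPolynomial (Fin k) F →ₐ[F] MvPolynomial (Fin k) F :=
    aeval (fun l => if l = i then (X i + X j) else X l) with hα
  have hβα : β.comp α = AlgHom.id F _ := by
    apply algHom_ext; intro l
    by_cases hl : l = i
    · subst hl; simp [hα, hβ, if_neg hij.symm]
    · simp [hα, hβ, hl]
  have hcomp : (aeval (fun l : Fin k => if l = i then (0 : MvPolynomial (Fin k) F) else X l) :
      MvPolynomial (Fin k) F →ₐ[F] MvPolynomial (Fin k) F).comp α = Ssub i j := by
    apply algHom_ext; intro l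
    by_cases hl : l = i
    · subst hl; simp [hα, Ssub, if_neg hij.symm]
    · simp [hα, Ssub, hl]
  have h0 : aeval (fun l : Fin k => if l = i then (0 : MvPolynomial (Fin k) F) else X l)
      (α P) = 0 := by
    have : (aeval (fun l : Fin k => if l = i then (0 : MvPolynomial (Fin k) F) else X l) :
        MvPolynomial (Fin k) F →ₐ[F] MvPolynomial (Fin k) F) (α P)
        = Ssub i j P := by rw [← AlgHom.comp_apply, hcomp]
    rw [this, h]
  have hX : X i ∣ α P :=
    X_dvd_of_aeval_eq_zero i _ (if_pos rfl) (fun l hl => if_neg hl) h0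
  have hd := map_dvd β hX
  have h1 : β (α P) = P := by rw [← AlgHom.comp_apply, hβα]; rfl
  have h2 : β (X i) = X i - X j := by simp [hβ]
  rw [h1, h2] at hd
  have hd2 := neg_dvd.mpr hd
  rwa [neg_sub] at hd2

lemma X_sub_X_ne_zero {i j : Fin k} (hij : i ≠ j) :
    (X j - X i : MvPolynomial (Fin k) F) ≠ 0 :=
  sub_ne_zero.mpr fun h => hij.symm (X_injective h)

lemma prime_X_sub_X {i j : Fin k} (hij : i ≠ j) :
    Prime (X j - X i : MvPolynomial (Fin k) F) := by
  refine ⟨X_sub_X_ne_zero hij, ?_, ?_⟩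
  · intro hu
    have := hu.map (eval (fun _ : Fin k => (0 : F)))
    simp only [map_sub, eval_X] at this
    rw [sub_self] at this
    exact not_isUnit_zero this
  · intro a b hab
    have h0 : Ssub i j (a * b) = 0 := Ssub_eq_zero_of_dvd hab
    rw [map_mul] at h0
    rcases mul_eq_zero.mp h0 with h | h
    · exact Or.inl (dvd_of_Ssub_eq_zero hij h)
    · exact Or.inr (dvd_of_Ssub_eq_zero hij h)

lemma not_dvd_X_sub_X {p q : Fin k × Fin k} (hp : p.1 < p.2) (hq : q.1 < q.2) (hpq : p ≠ q) :
    ¬ (X p.2 - X p.1 : MvPolynomial (Fin k) F) ∣ (X q.2 - X q.1) := by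
  intro h
  have h0 : Ssub p.1 p.2 (X q.2 - X q.1 : MvPolynomial (Fin k) F) = 0 :=
    Ssub_eq_zero_of_dvd h
  have hXne : ∀ {a b : Fin k}, a ≠ b → (X a : MvPolynomial (Fin k) F) ≠ X b :=
    fun hab h => hab (X_injective h)
  simp only [Ssub, map_sub, aeval_X] at h0
  rw [sub_eq_zero] at h0
  by_cases h2 : q.2 = p.1
  · rw [if_pos h2] at h0
    by_cases h1 : q.1 = p.1
    · exact absurd (h1 ▸ h2 : q.2 = q.1) hq.ne'
    · rw [if_neg h1] at h0
      have hp2 : p.2 = q.1 := X_injective h0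
      have h3 : q.1 < p.1 := by rw [← h2]; exact hq
      have h4 : p.1 < q.1 := by rw [← hp2]; exact hp
      exact absurd h3 (lt_asymm h4)
  · rw [if_neg h2] at h0
    by_cases h1 : q.1 = p.1
    · rw [if_pos h1] at h0
      rcases eq_or_ne q.2 p.2 with h3 | h3
      · exact hpq (Prod.ext_iff.mpr ⟨h1, h3⟩).symm
      · exact hXne h3 h0
    · rw [if_neg h1] at h0
      exact hXne hq.ne' h0

lemma inj1 (l : Fin k) : Function.Injective (fun a : Fin k => (a, l)) :=
  fun _ _ h => (Prod.ext_iff.mp h).1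

lemma inj2 (l : Fin k) : Function.Injective (fun b : Fin k => (l, b)) :=
  fun _ _ h => (Prod.ext_iff.mp h).2

lemma pairs_decomp (l : Fin k) :
    Finset.univ.filter (fun p : Fin k × Fin k => p.1 < p.2)
      = (Finset.univ.filter fun p : Fin k × Fin k => p.1 < p.2 ∧ p.1 ≠ l ∧ p.2 ≠ l)
        ∪ ((Finset.Iio l).image fun a => (a, l)) ∪ ((Finset.Ioi l).image fun b => (l, b)) := by
  ext p
  simp only [Finset.mem_filter, Finset.mem_union, Finset.mem_image, Finset.mem_Iio,
    Finset.mem_Ioi, Finset.mem_univ, true_and, Prod.ext_iff]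
  constructor
  · intro h
    rcases eq_or_ne p.2 l with h2 | h2
    · exact Or.inl (Or.inr ⟨p.1, h2 ▸ h, rfl, h2.symm⟩)
    rcases eq_or_ne p.1 l with h1 | h1
    · exact Or.inr ⟨p.2, h1 ▸ h, h1.symm, rfl⟩
    · exact Or.inl (Or.inl ⟨h, h1, h2⟩)
  · rintro ((⟨h, _, _⟩ | ⟨a, ha, h1, h2⟩) | ⟨b, hb, h1, h2⟩)
    · exact h
    · rw [← h1, ← h2]; exact ha
    · rw [← h1, ← h2]; exact hb

lemma disj1 (l : Fin k) :
    Disjoint (Finset.univ.filter fun p : Fin k × Fin k => p.1 < p.2 ∧ p.1 ≠ l ∧ p.2 ≠ l)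
      ((Finset.Iio l).image fun a => (a, l)) := by
  rw [Finset.disjoint_left]
  rintro p hp hq
  obtain ⟨a, _, hap⟩ := Finset.mem_image.mp hq
  exact (Finset.mem_filter.mp hp).2.2.2 (by rw [← hap])

lemma disj2 (l : Fin k) :
    Disjoint ((Finset.univ.filter fun p : Fin k × Fin k => p.1 < p.2 ∧ p.1 ≠ l ∧ p.2 ≠ l)
        ∪ ((Finset.Iio l).image fun a => (a, l)))
      ((Finset.Ioi l).image fun b => (l, b)) := by
  rw [Finset.disjoint_left]
  rintro p hp hq
  obtain ⟨b, hb, hbp⟩ := Finset.mem_image.mp hq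
  rw [Finset.mem_Ioi] at hb
  rcases Finset.mem_union.mp hp with hp1 | hp2
  · exact (Finset.mem_filter.mp hp1).2.2.1 (by rw [← hbp])
  · obtain ⟨a, ha, hap⟩ := Finset.mem_image.mp hp2
    rw [Finset.mem_Iio] at ha
    have h4 : b = l := by
      have e1 : p.2 = b := by rw [← hbp]
      have e2 : p.2 = l := by rw [← hap]
      rw [← e1, e2]
    exact absurd (h4 ▸ hb) (lt_irrefl l)

lemma Iio_union_Ioi (l : Fin k) : Finset.Iio l ∪ Finset.Ioi l = Finset.univ.erase l := by
  ext m
  simp only [Finset.mem_union, Finset.mem_Iio, Finset.mem_Ioi, Finset.mem_erase,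
    Finset.mem_univ, and_true]
  rw [← lt_or_lt_iff_ne]

lemma prod_neg_one_pow (s : Finset (Fin k)) (f : Fin k → MvPolynomial (Fin k) F) :
    ∏ a ∈ s, (-f a) = (-1) ^ s.card * ∏ a ∈ s, f a := by
  calc ∏ a ∈ s, (-f a) = ∏ a ∈ s, ((-1) * f a) :=
        Finset.prod_congr rfl fun a _ => (neg_one_mul _).symm
    _ = (-1) ^ s.card * ∏ a ∈ s, f a := by rw [Finset.prod_mul_distrib, Finset.prod_const]

lemma vand_split (l : Fin k) :
    ∏ p ∈ Finset.univ.filter (fun p : Fin k × Fin k => p.1 < p.2),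
        (X p.2 - X p.1 : MvPolynomial (Fin k) F)
      = (∏ p ∈ Finset.univ.filter
            (fun p : Fin k × Fin k => p.1 < p.2 ∧ p.1 ≠ l ∧ p.2 ≠ l),
          (X p.2 - X p.1))
        * ((-1) ^ (l : ℕ) * ∏ m ∈ Finset.univ.erase l, (X m - X l)) := by
  rw [pairs_decomp l, Finset.prod_union (disj2 l), Finset.prod_union (disj1 l),
    Finset.prod_image (fun a _ b _ h => inj1 l h), Finset.prod_image (fun a _ b _ h => inj2 l h)]
  have h1 : ∏ a ∈ Finset.Iio l, (X l - X a : MvPolynomial (Fin k) F)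
      = (-1) ^ (l : ℕ) * ∏ a ∈ Finset.Iio l, (X a - X l) := by
    have : ∀ a : Fin k, (X l - X a : MvPolynomial (Fin k) F) = -(X a - X l) :=
      fun a => (neg_sub _ _).symm
    simp_rw [this]
    rw [prod_neg_one_pow, Fin.card_Iio]
  rw [h1]
  have h2 : (∏ a ∈ Finset.Iio l, (X a - X l : MvPolynomial (Fin k) F))
      * ∏ b ∈ Finset.Ioi l, (X b - X l) = ∏ m ∈ Finset.univ.erase l, (X m - X l) := by
    rw [← Finset.prod_union (by
      rw [Finset.disjoint_left]; intro m hm hm'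
      simp only [Finset.mem_Iio] at hm
      simp only [Finset.mem_Ioi] at hm'
      exact absurd hm' (lt_asymm hm)), Iio_union_Ioi]
  rw [← h2]
  ring

lemma card_decomp (l : Fin k) :
    (Finset.univ.filter (fun p : Fin k × Fin k => p.1 < p.2)).card
      = (Finset.univ.filter
          (fun p : Fin k × Fin k => p.1 < p.2 ∧ p.1 ≠ l ∧ p.2 ≠ l)).card + (k - 1) := by
  rw [pairs_decomp l, Finset.card_union_of_disjoint (disj2 l),
    Finset.card_union_of_disjoint (disj1 l),
    Finset.card_image_of_injective _ (inj1 l), Finset.card_image_of_injective _ (inj2 l),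
    Fin.card_Iio, Fin.card_Ioi]
  have := l.isLt
  omega

lemma key_cancel {i j : Fin k} (hij : i < j) :
    ((-1 : MvPolynomial (Fin k) F) ^ (i : ℕ))
        * Ssub i j (∏ p ∈ Finset.univ.filter
            (fun p : Fin k × Fin k => p.1 < p.2 ∧ p.1 ≠ i ∧ p.2 ≠ i), (X p.2 - X p.1))
      + ((-1) ^ (j : ℕ))
        * Ssub i j (∏ p ∈ Finset.univ.filter
            (fun p : Fin k × Fin k => p.1 < p.2 ∧ p.1 ≠ j ∧ p.2 ≠ j), (X p.2 - X p.1)) = 0 := by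
  classical
  have hne : i ≠ j := hij.ne
  set Wi : MvPolynomial (Fin k) F := ∏ p ∈ Finset.univ.filter
    (fun p : Fin k × Fin k => p.1 < p.2 ∧ p.1 ≠ i ∧ p.2 ≠ i), (X p.2 - X p.1) with hWi
  set Wj : MvPolynomial (Fin k) F := ∏ p ∈ Finset.univ.filter
    (fun p : Fin k × Fin k => p.1 < p.2 ∧ p.1 ≠ j ∧ p.2 ≠ j), (X p.2 - X p.1) with hWj
  set U : Finset (Fin k) := (Finset.univ.erase i).erase j with hU
  have hUj : U = (Finset.univ.erase j).erase i := Finset.erase_right_comm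
  have hjU : j ∈ Finset.univ.erase i := Finset.mem_erase.mpr ⟨hne.symm, Finset.mem_univ j⟩
  have hiU : i ∈ Finset.univ.erase j := Finset.mem_erase.mpr ⟨hne, Finset.mem_univ i⟩
  have hEi : ∏ m ∈ Finset.univ.erase i, (X m - X i : MvPolynomial (Fin k) F)
      = (X j - X i) * ∏ m ∈ U, (X m - X i) :=
    (Finset.mul_prod_erase _ _ hjU).symm
  have hEj : ∏ m ∈ Finset.univ.erase j, (X m - X j : MvPolynomial (Fin k) F)
      = (X i - X j) * ∏ m ∈ U, (X m - X j) := by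
    rw [hUj]; exact (Finset.mul_prod_erase _ _ hiU).symm
  have hVV := (vand_split (F := F) i).symm.trans (vand_split (F := F) j)
  rw [hEi, hEj, ← hWi, ← hWj] at hVV
  -- cancel (X j - X i)
  have hcan : (-1 : MvPolynomial (Fin k) F) ^ (i : ℕ) * (Wi * ∏ m ∈ U, (X m - X i))
      = -((-1) ^ (j : ℕ) * (Wj * ∏ m ∈ U, (X m - X j))) := by
    apply mul_left_cancel₀ (X_sub_X_ne_zero (F := F) hne)
    rw [show (X i - X j : MvPolynomial (Fin k) F) = -(X j - X i) from (neg_sub _ _).symm] at hVV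
    calc (X j - X i : MvPolynomial (Fin k) F)
          * ((-1) ^ (i : ℕ) * (Wi * ∏ m ∈ U, (X m - X i)))
        = Wi * ((-1) ^ (i : ℕ) * ((X j - X i) * ∏ m ∈ U, (X m - X i))) := by ring
      _ = Wj * ((-1) ^ (j : ℕ) * (-(X j - X i) * ∏ m ∈ U, (X m - X j))) := hVV
      _ = (X j - X i) * -((-1) ^ (j : ℕ) * (Wj * ∏ m ∈ U, (X m - X j))) := by ring
  -- apply Ssub
  have hmap := congrArg (Ssub i j) hcan
  simp only [map_mul, map_neg, map_pow, map_one, map_prod] at hmap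
  have hSA : ∀ m ∈ U, Ssub i j (X m - X i : MvPolynomial (Fin k) F) = X m - X j := by
    intro m hm
    have hmi : m ≠ i := (Finset.mem_erase.mp (Finset.mem_erase.mp hm).2).1
    simp [Ssub, hmi]
  have hSB : ∀ m ∈ U, Ssub i j (X m - X j : MvPolynomial (Fin k) F) = X m - X j := by
    intro m hm
    have hmi : m ≠ i := (Finset.mem_erase.mp (Finset.mem_erase.mp hm).2).1
    simp [Ssub, hmi]
  rw [Finset.prod_congr rfl hSA, Finset.prod_congr rfl hSB] at hmap
  have hT : (∏ m ∈ U, (X m - X j : MvPolynomial (Fin k) F)) ≠ 0 := by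
    rw [Finset.prod_ne_zero_iff]
    intro m hm
    have hmj : m ≠ j := by rw [hUj] at hm; exact (Finset.mem_erase.mp (Finset.mem_erase.mp hm).2).1
    exact X_sub_X_ne_zero (fun h => hmj h.symm)
  have : ((-1 : MvPolynomial (Fin k) F) ^ (i : ℕ) * Ssub i j Wi)
      * (∏ m ∈ U, (X m - X j : MvPolynomial (Fin k) F))
      = (-((-1) ^ (j : ℕ) * Ssub i j Wj)) * (∏ m ∈ U, (X m - X j)) := by
    calc ((-1 : MvPolynomial (Fin k) F) ^ (i : ℕ) * Ssub i j Wi) * ∏ m ∈ U, (X m - X j)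
        = (-1) ^ (i : ℕ) * (Ssub i j Wi * ∏ m ∈ U, (X m - X j)) := by ring
      _ = -((-1) ^ (j : ℕ) * (Ssub i j Wj * ∏ m ∈ U, (X m - X j))) := hmap
      _ = (-((-1) ^ (j : ℕ) * Ssub i j Wj)) * ∏ m ∈ U, (X m - X j) := by ring
  have hfin := mul_right_cancel₀ hT this
  rw [hfin]
  ring

end SumVanishAux

open SumVanishAux in
/-- If `g 1, ..., g k` are polynomials in `z 1, ..., z k` over a field,
each of total degree `< k - 1`, such that for all `i < j` substituting `z i := z j`
makes `g i` and `g j` equal, then the polynomial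
`∑ i, (-1)^(i-1) * g i * ∏_{a<b, a,b≠i} (z b - z a)` is zero (equivalently, the
rational function `∑ i, g i / ∏_{j≠i} (z j - z i)` is identically zero). -/
theorem sum_vanishes_of_totalDegree_lt {F : Type*} [Field F] {k : ℕ}
    (g : Fin k → MvPolynomial (Fin k) F)
    (hdeg : ∀ i, (g i).totalDegree < k - 1)
    (hsub : ∀ i j : Fin k, i < j →
      MvPolynomial.aeval (fun l : Fin k => if l = i then (X j : MvPolynomial (Fin k) F) else X l)
          (g i)
        = MvPolynomial.aeval
            (fun l : Fin k => if l = i then (X j : MvPolynomial (Fin k) F) else X l) (g j)) :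
    ∑ i : Fin k, (-1 : MvPolynomial (Fin k) F) ^ (i : ℕ) * g i *
        ∏ p ∈ Finset.univ.filter
            (fun p : Fin k × Fin k => p.1 < p.2 ∧ p.1 ≠ i ∧ p.2 ≠ i),
          (X p.2 - X p.1) = 0 := by
  classical
  -- trivial small cases
  rcases Nat.lt_or_ge k 2 with hk2 | hk2
  · interval_cases k
    · simp
    · exact absurd (hdeg 0) (by omega)
  set W : Fin k → MvPolynomial (Fin k) F := fun l => ∏ p ∈ Finset.univ.filter
    (fun p : Fin k × Fin k => p.1 < p.2 ∧ p.1 ≠ l ∧ p.2 ≠ l), (X p.2 - X p.1) with hW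
  set P : MvPolynomial (Fin k) F :=
    ∑ i : Fin k, (-1 : MvPolynomial (Fin k) F) ^ (i : ℕ) * g i * W i with hP
  show P = 0
  by_contra hPne
  -- Step 1: every X p.2 - X p.1 divides P
  have hdvd : ∀ p ∈ Finset.univ.filter (fun p : Fin k × Fin k => p.1 < p.2),
      (X p.2 - X p.1 : MvPolynomial (Fin k) F) ∣ P := by
    rintro ⟨i, j⟩ hp
    have hij : i < j := (Finset.mem_filter.mp hp).2
    refine dvd_of_Ssub_eq_zero hij.ne ?_
    rw [hP, map_sum]
    have hzero : ∀ l ∈ (Finset.univ : Finset (Fin k)), l ≠ i ∧ l ≠ j →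
        Ssub i j ((-1 : MvPolynomial (Fin k) F) ^ (l : ℕ) * g l * W l) = 0 := by
      rintro l - ⟨hli, hlj⟩
      rw [map_mul, hW, map_prod]
      have hmem : ((i, j) : Fin k × Fin k) ∈ Finset.univ.filter
          (fun p : Fin k × Fin k => p.1 < p.2 ∧ p.1 ≠ l ∧ p.2 ≠ l) :=
        Finset.mem_filter.mpr ⟨Finset.mem_univ _, hij, fun h => hli h.symm, fun h => hlj h.symm⟩
      rw [Finset.prod_eq_zero hmem (by simp [Ssub]), mul_zero]
    rw [Finset.sum_eq_add_of_mem i j (Finset.mem_univ i) (Finset.mem_univ j) hij.ne hzero]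
    have hg : Ssub i j (g i) = Ssub i j (g j) := hsub i j hij
    simp only [map_mul, map_neg, map_pow, map_one]
    rw [hg]
    have hkc := key_cancel (F := F) hij
    have hkc' : (-1 : MvPolynomial (Fin k) F) ^ (i : ℕ) * Ssub i j (W i)
        + (-1) ^ (j : ℕ) * Ssub i j (W j) = 0 := hkc
    linear_combination (Ssub i j (g j)) * hkc'
  -- Step 2: the Vandermonde determinant divides P
  set lt : Finset (Fin k × Fin k) := Finset.univ.filter (fun p : Fin k × Fin k => p.1 < p.2)
    with hlt
  have hVdvd : (∏ p ∈ lt, (X p.2 - X p.1 : MvPolynomial (Fin k) F)) ∣ P := by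
    refine prod_dvd_of_primes lt _ (fun p hp => ?_) (fun p hp q hq hpq => ?_) P hdvd
    · exact prime_X_sub_X (Finset.mem_filter.mp hp).2.ne
    · exact not_dvd_X_sub_X (Finset.mem_filter.mp hp).2 (Finset.mem_filter.mp hq).2 hpq
  obtain ⟨Q, hQ⟩ := hVdvd
  have hQne : Q ≠ 0 := by rintro rfl; rw [mul_zero] at hQ; exact hPne hQ
  -- Step 3: degree bounds
  have hVhom : (∏ p ∈ lt, (X p.2 - X p.1 : MvPolynomial (Fin k) F)).IsHomogeneous lt.card := by
    have := MvPolynomial.IsHomogeneous.prod lt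
      (fun p : Fin k × Fin k => (X p.2 - X p.1 : MvPolynomial (Fin k) F)) (fun _ => 1)
      (fun p _ => (isHomogeneous_X _ _).sub (isHomogeneous_X _ _))
    simpa using this
  have hVne : (∏ p ∈ lt, (X p.2 - X p.1 : MvPolynomial (Fin k) F)) ≠ 0 := by
    rw [Finset.prod_ne_zero_iff]
    exact fun p hp => X_sub_X_ne_zero (Finset.mem_filter.mp hp).2.ne
  have hlow : lt.card ≤ P.totalDegree := by
    rw [hQ]; exact le_totalDegree_mul hVhom hVne hQne
  have hhigh : P.totalDegree ≤ (k - 2) + (lt.card - (k - 1)) := by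
    rw [hP]
    refine (MvPolynomial.totalDegree_finset_sum _ _).trans (Finset.sup_le fun i _ => ?_)
    have h1 : ((-1 : MvPolynomial (Fin k) F) ^ (i : ℕ)).totalDegree = 0 := by
      have : ((-1 : MvPolynomial (Fin k) F) ^ (i : ℕ)) = C ((-1) ^ (i : ℕ) : F) := by
        rw [map_pow, map_neg, map_one]
      rw [this, totalDegree_C]
    have h2 : (W i).totalDegree ≤ lt.card - (k - 1) := by
      rw [hW]
      refine (MvPolynomial.totalDegree_finset_prod _ _).trans ?_
      have hcard := card_decomp i
      rw [← hlt] at hcard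
      calc ∑ p ∈ Finset.univ.filter
            (fun p : Fin k × Fin k => p.1 < p.2 ∧ p.1 ≠ i ∧ p.2 ≠ i),
            (X p.2 - X p.1 : MvPolynomial (Fin k) F).totalDegree
          ≤ (Finset.univ.filter
              (fun p : Fin k × Fin k => p.1 < p.2 ∧ p.1 ≠ i ∧ p.2 ≠ i)).card • 1 :=
            Finset.sum_le_card_nsmul _ _ 1 fun p _ =>
              ((isHomogeneous_X _ _).sub (isHomogeneous_X _ _)).totalDegree_le
        _ = (Finset.univ.filter
              (fun p : Fin k × Fin k => p.1 < p.2 ∧ p.1 ≠ i ∧ p.2 ≠ i)).card := by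
            rw [smul_eq_mul, mul_one]
        _ ≤ lt.card - (k - 1) := by omega
    calc ((-1 : MvPolynomial (Fin k) F) ^ (i : ℕ) * g i * W i).totalDegree
        ≤ ((-1 : MvPolynomial (Fin k) F) ^ (i : ℕ) * g i).totalDegree + (W i).totalDegree :=
          totalDegree_mul _ _
      _ ≤ (((-1 : MvPolynomial (Fin k) F) ^ (i : ℕ)).totalDegree + (g i).totalDegree)
            + (W i).totalDegree := by
          exact Nat.add_le_add_right (totalDegree_mul _ _) _
      _ ≤ (k - 2) + (lt.card - (k - 1)) := by
          have := hdeg i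
          rw [h1]
          omega
  have hcard0 := card_decomp (⟨0, by omega⟩ : Fin k)
  rw [← hlt] at hcard0
  omega
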